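/- Let a : ℝ → ℝ be continuously differentiable with a(t) > 0 for all t, let f : [0,∞) → ℝ be continuously differentiable and nonnegative, and let G : ℝ × (0,∞) → ℝ be continuously differentiable. For (x,y) ∈ ℝ² write r = √(x² + y²), and define ρ(t,x,y) = f(r/a(t))/a(t)², u₁(t,x,y) = (a'(t)/a(t))·x − (G(t,r)/r)·y, and u₂(t,x,y) = (G(t,r)/r)·x + (a'(t)/a(t))·y. Then the two-dimensional continuity equation ∂ρ/∂t + ∂(ρu₁)/∂x + ∂(ρu₂)/∂y = 0 holds at every time t and every point (x,y) with r > 0. -/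

import Mathlib

/-- The planar radius `r = √(x² + y²)`. -/
noncomputable def rad (x y : ℝ) : ℝ := Real.sqrt (x ^ 2 + y ^ 2)

lemma hasDerivAt_rad_left (x y : ℝ) (h : 0 < rad x y) :
    HasDerivAt (fun χ => rad χ y) (x / rad x y) x := by
  have h2 : 0 < x ^ 2 + y ^ 2 := Real.sqrt_pos.mp h
  have h1 : HasDerivAt (fun χ : ℝ => χ ^ 2 + y ^ 2) (2 * x) x := by
    simpa using (hasDerivAt_pow 2 x).add_const (y ^ 2)
  have hs : HasDerivAt Real.sqrt (1 / (2 * Real.sqrt (x ^ 2 + y ^ 2))) (x ^ 2 + y ^ 2) :=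
    Real.hasDerivAt_sqrt h2.ne'
  have h3 : HasDerivAt (fun χ => Real.sqrt (χ ^ 2 + y ^ 2))
      (1 / (2 * Real.sqrt (x ^ 2 + y ^ 2)) * (2 * x)) x := hs.comp x h1
  have hv : x / rad x y = 1 / (2 * Real.sqrt (x ^ 2 + y ^ 2)) * (2 * x) := by
    have hs0 : Real.sqrt (x ^ 2 + y ^ 2) ≠ 0 := (Real.sqrt_pos.mpr h2).ne'
    rw [rad]; field_simp
  rw [hv]; exact h3

lemma hasDerivAt_rad_right (x y : ℝ) (h : 0 < rad x y) :
    HasDerivAt (fun υ => rad x υ) (y / rad x y) y := by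
  have h2 : 0 < x ^ 2 + y ^ 2 := Real.sqrt_pos.mp h
  have h1 : HasDerivAt (fun υ : ℝ => x ^ 2 + υ ^ 2) (2 * y) y := by
    simpa using ((hasDerivAt_pow 2 y).const_add (x ^ 2))
  have hs : HasDerivAt Real.sqrt (1 / (2 * Real.sqrt (x ^ 2 + y ^ 2))) (x ^ 2 + y ^ 2) :=
    Real.hasDerivAt_sqrt h2.ne'
  have h3 : HasDerivAt (fun υ => Real.sqrt (x ^ 2 + υ ^ 2))
      (1 / (2 * Real.sqrt (x ^ 2 + y ^ 2)) * (2 * y)) y := hs.comp y h1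
  have hv : y / rad x y = 1 / (2 * Real.sqrt (x ^ 2 + y ^ 2)) * (2 * y) := by
    have hs0 : Real.sqrt (x ^ 2 + y ^ 2) ≠ 0 := (Real.sqrt_pos.mpr h2).ne'
    rw [rad]; field_simp
  rw [hv]; exact h3

/-- For `ρ(t,x,y) = f(r/a(t))/a(t)²`,
`u₁ = (a'(t)/a(t))·x − (G(t,r)/r)·y`, `u₂ = (G(t,r)/r)·x + (a'(t)/a(t))·y`,
the 2D continuity equation `ρ_t + (ρu₁)_x + (ρu₂)_y = 0` holds wherever `r > 0`. -/
theorem continuity_equation_with_rotation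
    (a f : ℝ → ℝ) (G : ℝ → ℝ → ℝ)
    (ha : ContDiff ℝ 1 a) (hapos : ∀ t, 0 < a t)
    (hf : ContDiffOn ℝ 1 f (Set.Ici 0)) (hfnn : ∀ s ∈ Set.Ici (0 : ℝ), 0 ≤ f s)
    (hG : ContDiffOn ℝ 1 (fun p : ℝ × ℝ => G p.1 p.2) (Set.univ ×ˢ Set.Ioi 0))
    (ρ u₁ u₂ : ℝ → ℝ → ℝ → ℝ)
    (hρ : ∀ t x y, ρ t x y = f (rad x y / a t) / (a t) ^ 2)
    (hu₁ : ∀ t x y, u₁ t x y = (deriv a t / a t) * x - (G t (rad x y) / rad x y) * y)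
    (hu₂ : ∀ t x y, u₂ t x y = (G t (rad x y) / rad x y) * x + (deriv a t / a t) * y) :
    ∀ t x y, 0 < rad x y →
      deriv (fun τ => ρ τ x y) t
        + deriv (fun χ => ρ t χ y * u₁ t χ y) x
        + deriv (fun υ => ρ t x υ * u₂ t x υ) y = 0 := by
  intro t x y hr
  have hA : 0 < a t := hapos t
  have hAne : a t ≠ 0 := hA.ne'
  have hrne : rad x y ≠ 0 := hr.ne'
  have hrapos : 0 < rad x y / a t := div_pos hr hA
  have haA : HasDerivAt a (deriv a t) t := ((ha.differentiable one_ne_zero) t).hasDerivAt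
  have hfd : HasDerivAt f (deriv f (rad x y / a t)) (rad x y / a t) := by
    have h1 : ContDiffAt ℝ 1 f (rad x y / a t) := hf.contDiffAt (Ici_mem_nhds hrapos)
    exact (h1.differentiableAt one_ne_zero).hasDerivAt
  have hGd : HasDerivAt (fun s => G t s) (deriv (fun s => G t s) (rad x y)) (rad x y) := by
    have h1 : ContDiffAt ℝ 1 (fun p : ℝ × ℝ => G p.1 p.2) (t, rad x y) :=
      hG.contDiffAt (prod_mem_nhds Filter.univ_mem (Ioi_mem_nhds hr))
    have h2 : DifferentiableAt ℝ (fun p : ℝ × ℝ => G p.1 p.2) (t, rad x y) :=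
      h1.differentiableAt one_ne_zero
    have h3 : DifferentiableAt ℝ (fun s : ℝ => G t s) (rad x y) :=
      h2.comp _ (by fun_prop)
    exact h3.hasDerivAt
  -- time derivative
  have hTa : HasDerivAt (fun τ => rad x y / a τ)
      ((0 * a t - rad x y * deriv a t) / a t ^ 2) t :=
    (hasDerivAt_const t (rad x y)).div haA hAne
  have hTf : HasDerivAt (fun τ => f (rad x y / a τ))
      (deriv f (rad x y / a t) * ((0 * a t - rad x y * deriv a t) / a t ^ 2)) t :=
    hfd.comp t hTa
  have hTp : HasDerivAt (fun τ => a τ ^ 2) (2 * a t * deriv a t) t := by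
    simpa using haA.fun_pow 2
  have hT := hTf.fun_div hTp (pow_ne_zero 2 hAne)
  -- x derivative
  have hrx : HasDerivAt (fun χ => rad χ y) (x / rad x y) x := hasDerivAt_rad_left x y hr
  have hqx : HasDerivAt (fun χ => rad χ y / a t) (x / rad x y / a t) x := hrx.div_const _
  have hfx : HasDerivAt (fun χ => f (rad χ y / a t))
      (deriv f (rad x y / a t) * (x / rad x y / a t)) x := hfd.comp x hqx
  have hρx : HasDerivAt (fun χ => f (rad χ y / a t) / a t ^ 2)
      (deriv f (rad x y / a t) * (x / rad x y / a t) / a t ^ 2) x := hfx.div_const _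
  have hGx : HasDerivAt (fun χ => G t (rad χ y))
      (deriv (fun s => G t s) (rad x y) * (x / rad x y)) x := hGd.comp x hrx
  have hgrx := hGx.fun_div hrx hrne
  have hu1d := by simpa only [id_eq, mul_one] using
    ((hasDerivAt_id x).const_mul (deriv a t / a t)).fun_sub (hgrx.mul_const y)
  have hX := hρx.fun_mul hu1d
  -- y derivative
  have hry : HasDerivAt (fun υ => rad x υ) (y / rad x y) y := hasDerivAt_rad_right x y hr
  have hqy : HasDerivAt (fun υ => rad x υ / a t) (y / rad x y / a t) y := hry.div_const _
  have hfy : HasDerivAt (fun υ => f (rad x υ / a t))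
      (deriv f (rad x y / a t) * (y / rad x y / a t)) y := hfd.comp y hqy
  have hρy : HasDerivAt (fun υ => f (rad x υ / a t) / a t ^ 2)
      (deriv f (rad x y / a t) * (y / rad x y / a t) / a t ^ 2) y := hfy.div_const _
  have hGy : HasDerivAt (fun υ => G t (rad x υ))
      (deriv (fun s => G t s) (rad x y) * (y / rad x y)) y := hGd.comp y hry
  have hgry := hGy.fun_div hry hrne
  have hu2d := by simpa only [id_eq, mul_one] using
    (hgry.mul_const x).fun_add ((hasDerivAt_id y).const_mul (deriv a t / a t))
  have hY := hρy.fun_mul hu2d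
  -- rewrite the goal
  have e1 : (fun τ => ρ τ x y) = fun τ => f (rad x y / a τ) / a τ ^ 2 :=
    funext fun τ => hρ τ x y
  have e2 : (fun χ => ρ t χ y * u₁ t χ y)
      = fun χ => f (rad χ y / a t) / a t ^ 2
          * ((deriv a t / a t) * χ - G t (rad χ y) / rad χ y * y) := by
    funext χ; rw [hρ, hu₁]
  have e3 : (fun υ => ρ t x υ * u₂ t x υ)
      = fun υ => f (rad x υ / a t) / a t ^ 2
          * (G t (rad x υ) / rad x υ * x + (deriv a t / a t) * υ) := by
    funext υ; rw [hρ, hu₂]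
  rw [e1, e2, e3, hT.deriv, hX.deriv, hY.deriv]
  have hr2 : rad x y ^ 2 = x ^ 2 + y ^ 2 := Real.sq_sqrt (by positivity)
  field_simp
  ring_nf
  linear_combination (-(rad x y ^ 2 * deriv f (rad x y * (a t)⁻¹) * deriv a t)) * hr2
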